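/- arXiv:1206.3967 — 2 statements merged into one kernel-verified Lean document; each statement's English description precedes it below -/
import Mathlib

section
/- For every s ∈ ℝ and every w ∈ ℝ with w ≠ s, the function g_s is twice differentiable at w with second derivative g_s''(w) = g_s(w) + w·(w·g_s(w) + 𝟙(w ≤ s) − Φ(s)), and this second derivative satisfies |g_s''(w)| ≤ √(2π)/4 + |w|. -/
open MeasureTheory

noncomputable def Phi (s : ℝ) : ℝ :=
  ((ProbabilityTheory.gaussianReal 0 1) (Set.Iic s)).toReal

noncomputable def steinG (s w : ℝ) : ℝ :=
  Real.exp (w ^ 2 / 2) *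
    ∫ u in Set.Iic w, ((if u ≤ s then (1 : ℝ) else 0) - Phi s) * Real.exp (-u ^ 2 / 2)

open Real Set Filter Topology

noncomputable def J (w : ℝ) : ℝ := ∫ u in Set.Iic w, Real.exp (-u ^ 2 / 2)

lemma exp_eq' : (fun u : ℝ => Real.exp (-u ^ 2 / 2)) = fun u => Real.exp (-(1/2) * u ^ 2) := by
  funext u; congr 1; ring

lemma integrable_psi : Integrable (fun u : ℝ => Real.exp (-u ^ 2 / 2)) := by
  rw [exp_eq']; exact integrable_exp_neg_mul_sq (by norm_num)

lemma cont_psi : Continuous (fun u : ℝ => Real.exp (-u ^ 2 / 2)) := by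
  exact Real.continuous_exp.comp (by continuity)

lemma integral_psi : ∫ u : ℝ, Real.exp (-u ^ 2 / 2) = Real.sqrt (2 * π) := by
  rw [exp_eq', integral_gaussian]; congr 1; ring

lemma J_nonneg (w : ℝ) : 0 ≤ J w :=
  setIntegral_nonneg measurableSet_Iic fun u _ => (Real.exp_pos _).le

lemma J_mono : Monotone J := fun a b hab =>
  setIntegral_mono_set integrable_psi.integrableOn
    (ae_of_all _ fun u => (Real.exp_pos _).le)
    (HasSubset.Subset.eventuallyLE (Iic_subset_Iic.2 hab))

lemma J_le (w : ℝ) : J w ≤ Real.sqrt (2 * π) := by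
  rw [← integral_psi]
  exact setIntegral_le_integral integrable_psi (ae_of_all _ fun u => (Real.exp_pos _).le)

lemma J_pos (w : ℝ) : 0 < J w := by
  have h1 : (0:ℝ) < ∫ u in (w-1)..w, Real.exp (-u ^ 2 / 2) :=
    intervalIntegral.intervalIntegral_pos_of_pos_on
      integrable_psi.intervalIntegrable (fun x _ => Real.exp_pos _) (by linarith)
  have h2 : ∫ u in (w-1)..w, Real.exp (-u ^ 2 / 2) ≤ J w := by
    rw [intervalIntegral.integral_of_le (by linarith : w - 1 ≤ w)]
    exact setIntegral_mono_set integrable_psi.integrableOn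
      (ae_of_all _ fun u => (Real.exp_pos _).le)
      (HasSubset.Subset.eventuallyLE Ioc_subset_Iic_self)
  linarith

lemma J_neg_eq (w : ℝ) : J (-w) = Real.sqrt (2 * π) - J w := by
  have h1 : ∫ u in Iic w, Real.exp (-(-u) ^ 2 / 2) = ∫ u in Ioi (-w), Real.exp (-u ^ 2 / 2) :=
    integral_comp_neg_Iic w (fun u => Real.exp (-u ^ 2 / 2))
  simp only [neg_sq] at h1
  have h3 : (∫ u in Iic (-w), Real.exp (-u ^ 2 / 2)) + ∫ u in Ioi (-w), Real.exp (-u ^ 2 / 2)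
      = ∫ u : ℝ, Real.exp (-u ^ 2 / 2) :=
    intervalIntegral.integral_Iic_add_Ioi integrable_psi.integrableOn integrable_psi.integrableOn
  rw [integral_psi] at h3
  unfold J
  rw [← h1] at h3
  linarith

lemma hasDerivAt_J (w : ℝ) : HasDerivAt J (Real.exp (-w ^ 2 / 2)) w := by
  have key : ∀ x : ℝ, J x = J 0 + ∫ u in (0:ℝ)..x, Real.exp (-u ^ 2 / 2) := by
    intro x
    have := intervalIntegral.integral_Iic_sub_Iic
      (integrable_psi.integrableOn (s := Iic (0:ℝ))) (integrable_psi.integrableOn (s := Iic x))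
    unfold J; linarith
  have h : HasDerivAt (fun x => J 0 + ∫ u in (0:ℝ)..x, Real.exp (-u ^ 2 / 2))
      (Real.exp (-w ^ 2 / 2)) w :=
    (intervalIntegral.integral_hasDerivAt_right integrable_psi.intervalIntegrable
      cont_psi.aestronglyMeasurable.stronglyMeasurableAtFilter
      cont_psi.continuousAt).const_add _
  exact h.congr_of_eventuallyEq (Eventually.of_forall key)

lemma hasDerivAt_psi (x : ℝ) :
    HasDerivAt (fun u : ℝ => Real.exp (-u ^ 2 / 2)) (-x * Real.exp (-x ^ 2 / 2)) x := by
  have h : HasDerivAt (fun u : ℝ => -u ^ 2 / 2) (-x) x := by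
    have := ((hasDerivAt_pow 2 x).neg).div_const 2
    refine this.congr_deriv ?_; ring
  have := h.exp
  convert this using 1; ring

lemma integral_mul_psi (w : ℝ) :
    ∫ u in Iic w, u * Real.exp (-u ^ 2 / 2) = -Real.exp (-w ^ 2 / 2) := by
  have hderiv : ∀ x ∈ Iic w, HasDerivAt (fun u : ℝ => -Real.exp (-u ^ 2 / 2))
      (x * Real.exp (-x ^ 2 / 2)) x := by
    intro x _
    have := (hasDerivAt_psi x).neg
    refine this.congr_deriv ?_; ring
  have f'int : IntegrableOn (fun u : ℝ => u * Real.exp (-u ^ 2 / 2)) (Iic w) := by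
    have : Integrable (fun u : ℝ => u * Real.exp (-u ^ 2 / 2)) := by
      have h2 : (fun u : ℝ => u * Real.exp (-u ^ 2 / 2))
          = fun u => u * Real.exp (-(1/2) * u ^ 2) := by
        funext u; congr 2; ring
      rw [h2]; exact integrable_mul_exp_neg_mul_sq (by norm_num)
    exact this.integrableOn
  have htend : Tendsto (fun u : ℝ => -Real.exp (-u ^ 2 / 2)) atBot (𝓝 0) := by
    have h1 : Tendsto (fun u : ℝ => -u ^ 2 / 2) atBot atBot := by
      apply Tendsto.atBot_div_const (by norm_num : (0:ℝ) < 2)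
      have : Tendsto (fun u : ℝ => u ^ 2) atBot atTop := by
        have h4 := (tendsto_pow_atTop (n := 2) (by norm_num)).comp
          (tendsto_neg_atBot_atTop : Tendsto (fun x : ℝ => -x) atBot atTop)
        refine h4.congr fun u => ?_
        simp [Function.comp, neg_pow]
      exact tendsto_neg_atTop_atBot.comp this
    have := (Real.tendsto_exp_atBot.comp h1).neg
    simpa using this
  have := integral_Iic_of_hasDerivAt_of_tendsto' hderiv f'int htend
  rw [this]; ring

lemma T1 {w : ℝ} (hw : w < 0) : -w * J w ≤ Real.exp (-w ^ 2 / 2) := by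
  have h0 : -w * J w = ∫ u in Iic w, -w * Real.exp (-u ^ 2 / 2) := by
    rw [MeasureTheory.integral_const_mul]; rfl
  have hmono : ∫ u in Iic w, -w * Real.exp (-u ^ 2 / 2)
      ≤ ∫ u in Iic w, -u * Real.exp (-u ^ 2 / 2) := by
    apply setIntegral_mono_on (integrable_psi.integrableOn.const_mul _)
      _ measurableSet_Iic
    · intro u hu
      have : -w ≤ -u := by simp at hu; linarith
      exact mul_le_mul_of_nonneg_right this (Real.exp_pos _).le
    · have : Integrable (fun u : ℝ => u * Real.exp (-u ^ 2 / 2)) := by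
        have h2 : (fun u : ℝ => u * Real.exp (-u ^ 2 / 2))
            = fun u => u * Real.exp (-(1/2) * u ^ 2) := by
          funext u; congr 2; ring
        rw [h2]; exact integrable_mul_exp_neg_mul_sq (by norm_num)
      exact (this.neg.congr (ae_of_all _ fun u => by simp)).integrableOn
  have hval : ∫ u in Iic w, -u * Real.exp (-u ^ 2 / 2) = Real.exp (-w ^ 2 / 2) := by
    have h1 : ∫ u in Iic w, -u * Real.exp (-u ^ 2 / 2)
        = -∫ u in Iic w, u * Real.exp (-u ^ 2 / 2) := by
      rw [← integral_neg]; congr 1; funext u; ring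
    rw [h1, integral_mul_psi]; ring
  linarith

lemma T2 {w : ℝ} (hw : 0 < w) : w * (Real.sqrt (2 * π) - J w) ≤ Real.exp (-w ^ 2 / 2) := by
  have := T1 (w := -w) (by linarith)
  rw [J_neg_eq] at this
  simpa using this

noncomputable def mfun (w : ℝ) : ℝ := 2 * J w - Real.sqrt (2 * π) - π / 2 * w

noncomputable def Ffun (w : ℝ) : ℝ :=
  π / 2 * Real.exp (-w ^ 2 / 2) - J w * (Real.sqrt (2 * π) - J w)

lemma hasDerivAt_mfun (w : ℝ) :
    HasDerivAt mfun (2 * Real.exp (-w ^ 2 / 2) - π / 2) w := by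
  have h := (((hasDerivAt_J w).const_mul 2).sub_const (Real.sqrt (2 * π))).sub
    ((hasDerivAt_id w).const_mul (π / 2))
  refine h.congr_deriv ?_
  ring

lemma hasDerivAt_Ffun (w : ℝ) :
    HasDerivAt Ffun (Real.exp (-w ^ 2 / 2) * mfun w) w := by
  have h1 := (hasDerivAt_psi w).const_mul (π / 2)
  have h2 := (hasDerivAt_J w).mul ((hasDerivAt_J w).const_sub (Real.sqrt (2 * π)))
  have h := h1.sub h2
  refine h.congr_deriv ?_
  unfold mfun
  ring

lemma J_zero : 2 * J 0 = Real.sqrt (2 * π) := by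
  have := J_neg_eq 0
  rw [neg_zero] at this
  linarith

lemma mfun_zero : mfun 0 = 0 := by
  unfold mfun
  rw [show (2 : ℝ) * J 0 - Real.sqrt (2 * π) - π / 2 * 0
      = 2 * J 0 - Real.sqrt (2 * π) from by ring]
  rw [J_zero]; ring

lemma Ffun_zero : Ffun 0 = 0 := by
  have h := J_zero
  have hsq : Real.sqrt (2 * π) * Real.sqrt (2 * π) = 2 * π :=
    Real.mul_self_sqrt (by positivity)
  unfold Ffun
  rw [show (-(0:ℝ) ^ 2 / 2) = 0 from by norm_num, Real.exp_zero]
  nlinarith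

lemma sqrt_two_pi_le_pi : Real.sqrt (2 * π) ≤ π := by
  have h : (2 * π) ≤ π ^ 2 := by nlinarith [Real.pi_gt_three]
  calc Real.sqrt (2 * π) ≤ Real.sqrt (π ^ 2) := Real.sqrt_le_sqrt h
    _ = π := Real.sqrt_sq Real.pi_pos.le

lemma Ffun_nonneg_large {w : ℝ} (hw : 2 ≤ w) : 0 ≤ Ffun w := by
  have hwpos : (0:ℝ) < w := by linarith
  have t2 := T2 hwpos
  have hb : 0 ≤ Real.sqrt (2 * π) - J w := sub_nonneg.2 (J_le w)
  have ha : 0 ≤ J w := J_nonneg w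
  have hsle : Real.sqrt (2 * π) ≤ π / 2 * w := by
    have := sqrt_two_pi_le_pi
    nlinarith [Real.pi_pos]
  have hp : 0 < Real.exp (-w ^ 2 / 2) := Real.exp_pos _
  have key : w * (J w * (Real.sqrt (2 * π) - J w)) ≤ w * (π / 2 * Real.exp (-w ^ 2 / 2)) := by
    nlinarith [mul_le_mul_of_nonneg_right t2 (Real.sqrt_nonneg (2 * π)),
      mul_le_mul_of_nonneg_right hsle hp.le,
      mul_le_mul_of_nonneg_left (J_le w) (mul_nonneg hwpos.le hb)]
  have := le_of_mul_le_mul_left (by linarith : w * (J w * (Real.sqrt (2*π) - J w)) ≤ w * (π / 2 * Real.exp (-w ^ 2 / 2))) hwpos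
  unfold Ffun
  linarith

lemma mfun_concave : ConcaveOn ℝ (Set.Ici 0) mfun := by
  apply AntitoneOn.concaveOn_of_deriv (convex_Ici 0)
  · exact fun x _ => ((hasDerivAt_mfun x).continuousAt).continuousWithinAt
  · intro x _
    exact ((hasDerivAt_mfun x).differentiableAt).differentiableWithinAt
  · rw [interior_Ici]
    intro a ha b hb hab
    rw [(hasDerivAt_mfun a).deriv, (hasDerivAt_mfun b).deriv]
    have : Real.exp (-b ^ 2 / 2) ≤ Real.exp (-a ^ 2 / 2) := by
      apply Real.exp_le_exp.2
      simp only [Set.mem_Ioi] at ha hb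
      nlinarith
    linarith

lemma Ffun_nonneg (w : ℝ) : 0 ≤ Ffun w := by
  -- reduce to w ≥ 0 by symmetry
  have symm : ∀ v : ℝ, Ffun (-v) = Ffun v := by
    intro v
    unfold Ffun
    rw [J_neg_eq, neg_sq]
    ring
  have main : ∀ v : ℝ, 0 ≤ v → 0 ≤ Ffun v := by
    intro v hv
    rcases le_or_gt 2 v with hbig | hsmall
    · exact Ffun_nonneg_large hbig
    by_cases hall : ∀ t ∈ Set.Icc (0:ℝ) v, 0 ≤ mfun t
    · -- F monotone on [0, v]
      have hmono : MonotoneOn Ffun (Set.Icc 0 v) := by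
        apply monotoneOn_of_deriv_nonneg (convex_Icc 0 v)
        · exact fun x _ => ((hasDerivAt_Ffun x).continuousAt).continuousWithinAt
        · intro x _
          exact ((hasDerivAt_Ffun x).differentiableAt).differentiableWithinAt
        · intro x hx
          rw [(hasDerivAt_Ffun x).deriv]
          rw [interior_Icc] at hx
          exact mul_nonneg (Real.exp_pos _).le
            (hall x ⟨hx.1.le, hx.2.le⟩)
      have := hmono (Set.left_mem_Icc.2 hv) (Set.right_mem_Icc.2 hv) hv
      rw [Ffun_zero] at this
      exact this
    · push_neg at hall
      obtain ⟨t, ht, htneg⟩ := hall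
      have ht0 : 0 < t := by
        rcases lt_or_eq_of_le ht.1 with h | h
        · exact h
        · exfalso; rw [← h, mfun_zero] at htneg; exact lt_irrefl 0 htneg
      -- concavity: m u ≤ 0 for u ≥ t
      have hmneg : ∀ u : ℝ, t ≤ u → mfun u ≤ 0 := by
        intro u hu
        rcases eq_or_lt_of_le hu with h | h
        · rw [← h]; exact htneg.le
        have hu0 : 0 < u := lt_of_lt_of_le ht0 hu
        have hb0 : 0 < t / u := by positivity
        have hb1 : t / u ≤ 1 := (div_le_one hu0).2 hu
        have hcomb := mfun_concave.2 (Set.self_mem_Ici)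
          (Set.mem_Ici.2 hu0.le) (by linarith : (0:ℝ) ≤ 1 - t / u) hb0.le (by ring)
        simp only [smul_eq_mul, mul_zero, zero_add] at hcomb
        rw [mfun_zero, show t / u * u = t from div_mul_cancel₀ t hu0.ne'] at hcomb
        -- hcomb : (1 - t/u) * 0 + t/u * mfun u ≤ mfun t
        nlinarith
      -- F antitone on [v, 2]
      have hanti : AntitoneOn Ffun (Set.Icc v 2) := by
        apply antitoneOn_of_deriv_nonpos (convex_Icc v 2)
        · exact fun x _ => ((hasDerivAt_Ffun x).continuousAt).continuousWithinAt
        · intro x _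
          exact ((hasDerivAt_Ffun x).differentiableAt).differentiableWithinAt
        · intro x hx
          rw [interior_Icc] at hx
          rw [(hasDerivAt_Ffun x).deriv]
          have hmx : mfun x ≤ 0 := hmneg x (by linarith [ht.2, hx.1])
          exact mul_nonpos_of_nonneg_of_nonpos (Real.exp_pos _).le hmx
      have h2 := hanti (Set.left_mem_Icc.2 hsmall.le) (Set.right_mem_Icc.2 hsmall.le) hsmall.le
      exact le_trans (Ffun_nonneg_large le_rfl) h2
  rcases le_or_gt 0 w with h | h
  · exact main w h
  · rw [← symm w] at *
    exact main (-w) (by linarith)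


lemma Phi_eq (s : ℝ) : Phi s = (Real.sqrt (2 * π))⁻¹ * J s := by
  unfold Phi
  rw [ProbabilityTheory.gaussianReal_apply_eq_integral 0 one_ne_zero]
  rw [ENNReal.toReal_ofReal (setIntegral_nonneg measurableSet_Iic
    fun x _ => ProbabilityTheory.gaussianPDFReal_nonneg _ _ _)]
  have hpt : ∀ x : ℝ, ProbabilityTheory.gaussianPDFReal 0 1 x
      = (Real.sqrt (2 * π))⁻¹ * Real.exp (-x ^ 2 / 2) := by
    intro x
    simp [ProbabilityTheory.gaussianPDFReal]
  unfold J
  rw [← MeasureTheory.integral_const_mul]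
  exact setIntegral_congr_fun measurableSet_Iic fun x _ => hpt x

lemma Phi_mul_sqrt (s : ℝ) : Phi s * Real.sqrt (2 * π) = J s := by
  rw [Phi_eq]
  have h : Real.sqrt (2 * π) ≠ 0 := by positivity
  field_simp

noncomputable def hfun (s u : ℝ) : ℝ :=
  ((if u ≤ s then (1 : ℝ) else 0) - Phi s) * Real.exp (-u ^ 2 / 2)

lemma integrable_hfun (s : ℝ) : Integrable (hfun s) := by
  have heq : hfun s = fun u => Set.indicator (Set.Iic s) (fun u => Real.exp (-u ^ 2 / 2)) u
      - Phi s * Real.exp (-u ^ 2 / 2) := by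
    funext u
    unfold hfun
    by_cases h : u ≤ s <;> simp [Set.indicator, Set.mem_Iic, h] <;> ring
  rw [heq]
  exact (integrable_psi.indicator measurableSet_Iic).sub (integrable_psi.const_mul _)

lemma hasDerivAt_integral_hfun (s : ℝ) {x : ℝ} (hx : x ≠ s) :
    HasDerivAt (fun y => ∫ u in Set.Iic y, hfun s u) (hfun s x) x := by
  have key : ∀ y : ℝ, (∫ u in Set.Iic y, hfun s u)
      = (∫ u in Set.Iic 0, hfun s u) + ∫ u in (0:ℝ)..y, hfun s u := by
    intro y
    have := intervalIntegral.integral_Iic_sub_Iic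
      ((integrable_hfun s).integrableOn (s := Set.Iic (0:ℝ)))
      ((integrable_hfun s).integrableOn (s := Set.Iic y))
    linarith
  have hcont : ContinuousAt (hfun s) x := by
    rcases lt_or_gt_of_ne hx with h | h
    · have hev : ∀ᶠ u in 𝓝 x, ((1 : ℝ) - Phi s) * Real.exp (-u ^ 2 / 2) = hfun s u := by
        filter_upwards [Iio_mem_nhds h] with u hu
        unfold hfun
        rw [if_pos (le_of_lt hu)]
      exact ((continuous_const.mul cont_psi).continuousAt).congr hev
    · have hev : ∀ᶠ u in 𝓝 x, ((0 : ℝ) - Phi s) * Real.exp (-u ^ 2 / 2) = hfun s u := by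
        filter_upwards [Ioi_mem_nhds h] with u hu
        unfold hfun
        rw [if_neg (not_le.2 hu)]
      exact ((continuous_const.mul cont_psi).continuousAt).congr hev
  have h := (intervalIntegral.integral_hasDerivAt_right (a := (0:ℝ))
    ((integrable_hfun s).intervalIntegrable)
    ((integrable_hfun s).aestronglyMeasurable.stronglyMeasurableAtFilter)
    hcont).const_add (∫ u in Set.Iic 0, hfun s u)
  exact h.congr_of_eventuallyEq (Eventually.of_forall key)

lemma steinG_eq (s : ℝ) :
    steinG s = fun y => Real.exp (y ^ 2 / 2) * ∫ u in Set.Iic y, hfun s u := rfl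

lemma hasDerivAt_steinG (s : ℝ) {x : ℝ} (hx : x ≠ s) :
    HasDerivAt (steinG s)
      (x * steinG s x + ((if x ≤ s then (1 : ℝ) else 0) - Phi s)) x := by
  have hE : HasDerivAt (fun y : ℝ => Real.exp (y ^ 2 / 2)) (x * Real.exp (x ^ 2 / 2)) x := by
    have h : HasDerivAt (fun y : ℝ => y ^ 2 / 2) x x := by
      have h0 := (hasDerivAt_pow 2 x).div_const 2
      refine h0.congr_deriv ?_; ring
    have h2 := h.exp
    convert h2 using 1; ring
  have hI := hasDerivAt_integral_hfun s hx
  have hprod := hE.mul hI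
  rw [steinG_eq s]
  have hEψ : Real.exp (x ^ 2 / 2) * Real.exp (-x ^ 2 / 2) = 1 := by
    rw [← Real.exp_add, show x ^ 2 / 2 + -x ^ 2 / 2 = 0 from by ring, Real.exp_zero]
  refine hprod.congr_deriv (Eq.symm ?_)
  show x * (Real.exp (x ^ 2 / 2) * ∫ u in Set.Iic x, hfun s u)
      + ((if x ≤ s then (1 : ℝ) else 0) - Phi s) = _
  unfold hfun
  linear_combination (-((if x ≤ s then (1:ℝ) else 0) - Phi s)) * hEψ

lemma Ii_eq_left (s w : ℝ) (hws : w ≤ s) :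
    (∫ u in Set.Iic w, hfun s u) = (1 - Phi s) * J w := by
  unfold J
  rw [← MeasureTheory.integral_const_mul]
  apply setIntegral_congr_fun measurableSet_Iic
  intro u hu
  unfold hfun
  rw [if_pos (le_trans hu hws)]

lemma Ii_eq_right (s w : ℝ) (hsw : s < w) :
    (∫ u in Set.Iic w, hfun s u) = Phi s * (Real.sqrt (2 * π) - J w) := by
  have hsplit := intervalIntegral.integral_Iic_sub_Iic
    ((integrable_hfun s).integrableOn (s := Set.Iic s))
    ((integrable_hfun s).integrableOn (s := Set.Iic w))
  have hIs : (∫ u in Set.Iic s, hfun s u) = (1 - Phi s) * J s := Ii_eq_left s s le_rfl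
  have hmid : (∫ u in s..w, hfun s u) = -Phi s * (J w - J s) := by
    rw [intervalIntegral.integral_of_le hsw.le]
    have hJ : J w - J s = ∫ u in Set.Ioc s w, Real.exp (-u ^ 2 / 2) := by
      have h2 := intervalIntegral.integral_Iic_sub_Iic
        (integrable_psi.integrableOn (s := Set.Iic s))
        (integrable_psi.integrableOn (s := Set.Iic w))
      rw [intervalIntegral.integral_of_le hsw.le] at h2
      unfold J; linarith
    rw [hJ, ← MeasureTheory.integral_const_mul]
    apply setIntegral_congr_fun measurableSet_Ioc
    intro u hu
    unfold hfun
    rw [if_neg (not_le.2 hu.1)]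
    ring
  have hPJ := Phi_mul_sqrt s
  linear_combination hsplit + hIs + hmid - hPJ


set_option maxHeartbeats 2000000 in
/-- At every `w ≠ s`, the Stein solution `g_s` is twice differentiable: its derivative
function is differentiable at `w` with derivative
`g_s w + w * (w * g_s w + 𝟙(w ≤ s) - Φ s)`, and this second derivative is bounded in
absolute value by `√(2π)/4 + |w|`. -/
theorem steinG_second_deriv (s w : ℝ) (hw : w ≠ s) :
    HasDerivAt (deriv (steinG s))
      (steinG s w + w * (w * steinG s w + (if w ≤ s then (1 : ℝ) else 0) - Phi s)) w ∧
    |steinG s w + w * (w * steinG s w + (if w ≤ s then (1 : ℝ) else 0) - Phi s)| ≤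
      Real.sqrt (2 * Real.pi) / 4 + |w| := by
  have hGw := hasDerivAt_steinG s hw
  have hs2 : 0 < Real.sqrt (2 * π) := Real.sqrt_pos.2 (by positivity)
  have hsqsq : Real.sqrt (2 * π) * Real.sqrt (2 * π) = 2 * π :=
    Real.mul_self_sqrt (by positivity)
  have hEpos : 0 < Real.exp (w ^ 2 / 2) := Real.exp_pos _
  have hPpos : 0 < Real.exp (-w ^ 2 / 2) := Real.exp_pos _
  have hEP : Real.exp (w ^ 2 / 2) * Real.exp (-w ^ 2 / 2) = 1 := by
    rw [← Real.exp_add, show w ^ 2 / 2 + -w ^ 2 / 2 = 0 from by ring, Real.exp_zero]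
  have hApos : 0 < J w := J_pos w
  have hBpos : 0 < Real.sqrt (2 * π) - J w := by
    have := J_pos (-w); rw [J_neg_eq w] at this; linarith
  have hcore : J w * (Real.sqrt (2 * π) - J w) ≤ π / 2 * Real.exp (-w ^ 2 / 2) := by
    have := Ffun_nonneg w; unfold Ffun at this; linarith
  have hPJ := Phi_mul_sqrt s
  have hJs_le : J s ≤ Real.sqrt (2 * π) := J_le s
  have hJs_pos : 0 < J s := J_pos s
  have hΦ0 : 0 < Phi s := by nlinarith
  have hΦ1 : Phi s ≤ 1 := by nlinarith
  constructor
  · -- the derivative statement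
    have hNder : HasDerivAt
        (fun x => x * steinG s x + ((if w ≤ s then (1 : ℝ) else 0) - Phi s))
        (steinG s w + w * (w * steinG s w + (if w ≤ s then (1 : ℝ) else 0) - Phi s)) w := by
      have h1 := ((hasDerivAt_id w).mul hGw).add_const
        ((if w ≤ s then (1 : ℝ) else 0) - Phi s)
      refine h1.congr_deriv ?_
      simp only [id_eq]
      ring
    have hEq : deriv (steinG s) =ᶠ[𝓝 w]
        fun x => x * steinG s x + ((if w ≤ s then (1 : ℝ) else 0) - Phi s) := by
      rcases lt_or_gt_of_ne hw with h | h
      · filter_upwards [Iio_mem_nhds h] with x hx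
        rw [(hasDerivAt_steinG s (ne_of_lt hx)).deriv, if_pos (le_of_lt hx), if_pos h.le]
      · filter_upwards [Ioi_mem_nhds h] with x hx
        rw [(hasDerivAt_steinG s (ne_of_gt hx)).deriv, if_neg (not_le.2 hx),
          if_neg (not_le.2 h)]
    exact hNder.congr_of_eventuallyEq hEq
  · -- the bound
    have habs : |steinG s w + w * (w * steinG s w + (if w ≤ s then (1 : ℝ) else 0) - Phi s)|
        ≤ |steinG s w| + |w| * |w * steinG s w + (if w ≤ s then (1 : ℝ) else 0) - Phi s| := by
      refine (abs_add_le _ _).trans ?_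
      rw [abs_mul]
    have hgbd : |steinG s w| ≤ Real.sqrt (2 * π) / 4 ∧
        |w * steinG s w + (if w ≤ s then (1 : ℝ) else 0) - Phi s| ≤ 1 := by
      rcases lt_or_gt_of_ne hw with h | h
      · -- w < s
        have hgw : steinG s w = Real.exp (w ^ 2 / 2) * ((1 - Phi s) * J w) := by
          have h0 : steinG s w = Real.exp (w ^ 2 / 2) * ∫ u in Set.Iic w, hfun s u := rfl
          rw [h0, Ii_eq_left s w h.le]
        have hcw : (if w ≤ s then (1 : ℝ) else 0) = 1 := if_pos h.le
        have hJsw : J w ≤ J s := J_mono h.le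
        have hq0 : 0 ≤ 1 - Phi s := by linarith
        constructor
        · -- |g| ≤ √(2π)/4
          have hg0 : 0 ≤ steinG s w := by
            rw [hgw]
            have := hΦ1
            positivity
          rw [abs_of_nonneg hg0, hgw]
          have e1 : Real.sqrt (2 * π) * ((1 - Phi s) * J w)
              ≤ (Real.sqrt (2 * π) - J w) * J w := by
            nlinarith [mul_le_mul_of_nonneg_right hJsw hApos.le]
          have e2 : Real.exp (w ^ 2 / 2) * ((Real.sqrt (2 * π) - J w) * J w) ≤ π / 2 := by
            nlinarith [mul_le_mul_of_nonneg_left hcore hEpos.le]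
          have e3 : Real.sqrt (2 * π) * (Real.exp (w ^ 2 / 2) * ((1 - Phi s) * J w))
              ≤ π / 2 := by
            nlinarith [mul_le_mul_of_nonneg_left e1 hEpos.le]
          nlinarith [e3, hs2, hsqsq]
        · -- |D| ≤ 1
          rw [hcw, hgw]
          rcases le_or_gt 0 w with hw0 | hw0
          · have hwEB : w * (Real.exp (w ^ 2 / 2) * (Real.sqrt (2 * π) - J w)) ≤ 1 := by
              rcases eq_or_lt_of_le hw0 with heq | hpos
              · rw [← heq]; norm_num
              · have ht2 := T2 hpos
                nlinarith [mul_le_mul_of_nonneg_left ht2 hEpos.le]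
            apply abs_le.2
            constructor
            · nlinarith [mul_nonneg (mul_nonneg hw0 hEpos.le)
                (mul_nonneg hq0 hApos.le)]
            · have k1 : Real.sqrt (2 * π) * (1 - Phi s) ≤ Real.sqrt (2 * π) - J w := by
                nlinarith
              have hwEA : 0 ≤ w * Real.exp (w ^ 2 / 2) * J w :=
                mul_nonneg (mul_nonneg hw0 hEpos.le) hApos.le
              have k2 := mul_le_mul_of_nonneg_left k1 hwEA
              have k3 := mul_le_mul_of_nonneg_right hwEB hApos.le
              have k4 : J w ≤ Phi s * Real.sqrt (2 * π) := by rw [hPJ]; exact hJsw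
              nlinarith [k2, k3, k4, hs2]
          · have hT1 := T1 hw0
            have hwEA : -w * (Real.exp (w ^ 2 / 2) * J w) ≤ 1 := by
              nlinarith [mul_le_mul_of_nonneg_left hT1 hEpos.le]
            have hpar : 0 ≤ 1 + w * (Real.exp (w ^ 2 / 2) * J w) := by nlinarith
            apply abs_le.2
            constructor
            · nlinarith [mul_nonneg hq0 hpar]
            · have hneg : w * (Real.exp (w ^ 2 / 2) * J w) ≤ 0 := by
                nlinarith [mul_nonneg hEpos.le hApos.le]
              nlinarith [mul_nonneg hq0 (neg_nonneg.2 hneg)]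
      · -- s < w
        have hgw : steinG s w = Real.exp (w ^ 2 / 2) * (Phi s * (Real.sqrt (2 * π) - J w)) := by
          have h0 : steinG s w = Real.exp (w ^ 2 / 2) * ∫ u in Set.Iic w, hfun s u := rfl
          rw [h0, Ii_eq_right s w h]
        have hcw : (if w ≤ s then (1 : ℝ) else 0) = 0 := if_neg (not_le.2 h)
        have hJsw : J s ≤ J w := J_mono h.le
        constructor
        · have hg0 : 0 ≤ steinG s w := by
            rw [hgw]
            have := hΦ0
            positivity
          rw [abs_of_nonneg hg0, hgw]
          have e1 : Real.sqrt (2 * π) * (Phi s * (Real.sqrt (2 * π) - J w))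
              ≤ J w * (Real.sqrt (2 * π) - J w) := by
            nlinarith [mul_le_mul_of_nonneg_right hJsw hBpos.le]
          have e3 : Real.sqrt (2 * π) * (Real.exp (w ^ 2 / 2) * (Phi s * (Real.sqrt (2 * π) - J w)))
              ≤ π / 2 := by
            nlinarith [mul_le_mul_of_nonneg_left e1 hEpos.le,
              mul_le_mul_of_nonneg_left hcore hEpos.le]
          nlinarith [e3, hs2, hsqsq]
        · rw [hcw, hgw]
          rcases le_or_gt 0 w with hw0 | hw0
          · have hwEB : w * (Real.exp (w ^ 2 / 2) * (Real.sqrt (2 * π) - J w)) ≤ 1 := by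
              rcases eq_or_lt_of_le hw0 with heq | hpos
              · rw [← heq]; norm_num
              · have ht2 := T2 hpos
                nlinarith [mul_le_mul_of_nonneg_left ht2 hEpos.le]
            have hwEB0 : 0 ≤ w * (Real.exp (w ^ 2 / 2) * (Real.sqrt (2 * π) - J w)) :=
              mul_nonneg hw0 (mul_nonneg hEpos.le hBpos.le)
            apply abs_le.2
            constructor
            · nlinarith [mul_nonneg hΦ0.le hwEB0]
            · nlinarith [mul_nonneg hΦ0.le (sub_nonneg.2 hwEB)]
          · have hT1 := T1 hw0
            have hwEA : -w * (Real.exp (w ^ 2 / 2) * J w) ≤ 1 := by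
              nlinarith [mul_le_mul_of_nonneg_left hT1 hEpos.le]
            have hwEB0 : w * (Real.exp (w ^ 2 / 2) * (Real.sqrt (2 * π) - J w)) ≤ 0 := by
              nlinarith [mul_nonneg hEpos.le hBpos.le]
            apply abs_le.2
            constructor
            · -- -1 ≤ Φ(wEB - 1) : i.e. Φ(1 - wEB) ≤ 1
              have k4 : Phi s * Real.sqrt (2 * π) ≤ J w := by rw [hPJ]; exact hJsw
              have k5 := mul_le_mul_of_nonneg_right k4
                (mul_nonneg (mul_nonneg (neg_nonneg.2 hw0.le) hEpos.le) hBpos.le)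
              have k6 := mul_le_mul_of_nonneg_right hwEA hBpos.le
              nlinarith [k5, k6, k4, hs2, mul_pos hΦ0 hs2]
            · nlinarith [mul_nonneg hΦ0.le (neg_nonneg.2 hwEB0)]
    calc |steinG s w + w * (w * steinG s w + (if w ≤ s then (1 : ℝ) else 0) - Phi s)|
        ≤ |steinG s w| + |w| * |w * steinG s w + (if w ≤ s then (1 : ℝ) else 0) - Phi s| := habs
      _ ≤ Real.sqrt (2 * π) / 4 + |w| := by
          nlinarith [hgbd.1, hgbd.2, abs_nonneg w,
            abs_nonneg (w * steinG s w + (if w ≤ s then (1 : ℝ) else 0) - Phi s)]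
end

section
/- Let s ∈ ℝ and let a, b ∈ ℝ with b ≤ s < a. Then |g_s(b) − g_s(a) − (a·g_s(a) − Φ(s))·(b − a) − (b − s)| ≤ 2·(√(2π)/4 + |a| + (a − b))·(a − b)². -/
open MeasureTheory

open Real Set

noncomputable def Jf (t : ℝ) : ℝ := ∫ u in Set.Iic t, Real.exp (-u^2/2)

lemma grw : (fun u : ℝ => Real.exp (-u^2/2)) = fun u => Real.exp (-(1/2) * u^2) := by
  ext u; ring_nf

lemma gint : Integrable (fun u : ℝ => Real.exp (-u^2/2)) := by
  rw [grw]; exact integrable_exp_neg_mul_sq (by norm_num)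

lemma Phi_eq_s12 (s : ℝ) : Phi s = Jf s / Real.sqrt (2*Real.pi) := by
  rw [Phi, ProbabilityTheory.gaussianReal_apply_eq_integral 0 one_ne_zero,
    ENNReal.toReal_ofReal]
  · rw [Jf, eq_div_iff (by positivity), ← integral_mul_const]
    congr 1; ext x
    rw [ProbabilityTheory.gaussianPDFReal]
    push_cast
    rw [mul_one, mul_one, sub_zero]
    field_simp
  · exact setIntegral_nonneg measurableSet_Iic
      fun x _ => ProbabilityTheory.gaussianPDFReal_nonneg 0 1 x

lemma gtot : ∫ u : ℝ, Real.exp (-u^2/2) = Real.sqrt (2*Real.pi) := by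
  rw [grw, integral_gaussian]
  rw [div_eq_mul_inv, mul_comm]; norm_num

lemma ghalf : ∫ u in Set.Ioi (0:ℝ), Real.exp (-u^2/2) = Real.sqrt (2*Real.pi) / 2 := by
  rw [grw, integral_gaussian_Ioi]
  rw [div_eq_mul_inv]; norm_num; ring

lemma Jf_nonneg (t : ℝ) : 0 ≤ Jf t :=
  setIntegral_nonneg measurableSet_Iic fun x _ => (Real.exp_pos _).le

lemma Jf_add_tail (t : ℝ) :
    Jf t + ∫ u in Set.Ioi t, Real.exp (-u^2/2) = Real.sqrt (2*Real.pi) := by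
  rw [Jf, ← gtot]
  exact intervalIntegral.integral_Iic_add_Ioi gint.integrableOn gint.integrableOn

lemma tail_nonneg (t : ℝ) : 0 ≤ ∫ u in Set.Ioi t, Real.exp (-u^2/2) :=
  setIntegral_nonneg measurableSet_Ioi fun x _ => (Real.exp_pos _).le

lemma Jf_le (t : ℝ) : Jf t ≤ Real.sqrt (2*Real.pi) := by
  have := Jf_add_tail t; have := tail_nonneg t; linarith

lemma Jf_mono {x y : ℝ} (h : x ≤ y) : Jf x ≤ Jf y := by
  rw [Jf, Jf]
  apply setIntegral_mono_set gint.integrableOn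
    (Filter.Eventually.of_forall fun x => (Real.exp_pos _).le)
  exact Filter.Eventually.of_forall (Set.Iic_subset_Iic.mpr h)

lemma Phi_nonneg (s : ℝ) : 0 ≤ Phi s := by
  rw [Phi_eq_s12]; exact div_nonneg (Jf_nonneg s) (Real.sqrt_nonneg _)

lemma Phi_le_one (s : ℝ) : Phi s ≤ 1 := by
  rw [Phi_eq_s12, div_le_one (by positivity)]; exact Jf_le s

lemma Jf_hasDeriv (t : ℝ) : HasDerivAt Jf (Real.exp (-t^2/2)) t := by
  have key : ∀ x : ℝ, Jf x = Jf 0 + ∫ u in (0:ℝ)..x, Real.exp (-u^2/2) := by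
    intro x
    have h := intervalIntegral.integral_Iic_sub_Iic (a := 0) (b := x)
      gint.integrableOn gint.integrableOn
    simp only [Jf]; linarith
  have : HasDerivAt (fun x => Jf 0 + ∫ u in (0:ℝ)..x, Real.exp (-u^2/2))
      (Real.exp (-t^2/2)) t := by
    apply HasDerivAt.const_add
    exact (intervalIntegral.integral_hasDerivAt_right gint.intervalIntegrable
      gint.aestronglyMeasurable.stronglyMeasurableAtFilter
      (Continuous.continuousAt (by continuity))).congr_deriv rfl
  exact this.congr_of_eventuallyEq (Filter.Eventually.of_forall key) |>.congr_deriv rfl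

lemma stein_integrand_integrable (s : ℝ) :
    Integrable (fun u : ℝ => ((if u ≤ s then (1 : ℝ) else 0) - Phi s) * Real.exp (-u ^ 2 / 2)) := by
  apply Integrable.mono' (gint.const_mul 2)
  · apply AEStronglyMeasurable.mul
    · apply Measurable.aestronglyMeasurable
      exact (Measurable.ite measurableSet_Iic measurable_const measurable_const).sub
        measurable_const
    · exact (Real.continuous_exp.comp (by continuity)).aestronglyMeasurable
  · refine Filter.Eventually.of_forall fun u => ?_
    rw [norm_mul, Real.norm_eq_abs, Real.norm_eq_abs, Real.abs_exp]
    have h1 : |(if u ≤ s then (1:ℝ) else 0) - Phi s| ≤ 2 := by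
      have := Phi_nonneg s; have := Phi_le_one s
      split <;> rw [abs_le] <;> constructor <;> linarith
    have : Real.exp (-u^2/2) = Real.exp (-u^2/2) := rfl
    nlinarith [Real.exp_pos (-u^2/2)]

lemma steinG_below {s w : ℝ} (h : w ≤ s) :
    steinG s w = Real.exp (w^2/2) * ((1 - Phi s) * Jf w) := by
  rw [steinG]
  congr 1
  have : EqOn (fun u : ℝ => ((if u ≤ s then (1 : ℝ) else 0) - Phi s) * Real.exp (-u ^ 2 / 2))
      (fun u : ℝ => (1 - Phi s) * Real.exp (-u ^ 2 / 2)) (Set.Iic w) := by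
    intro u hu
    simp only [if_pos (le_trans (mem_Iic.mp hu) h)]
  rw [setIntegral_congr_fun measurableSet_Iic this, integral_const_mul]
  rfl

lemma integral_Ioc_g {x y : ℝ} (h : x ≤ y) :
    ∫ u in Set.Ioc x y, Real.exp (-u^2/2) = Jf y - Jf x := by
  rw [← intervalIntegral.integral_of_le h]
  simp only [Jf]
  exact (intervalIntegral.integral_Iic_sub_Iic gint.integrableOn gint.integrableOn).symm

lemma steinG_above {s w : ℝ} (h : s ≤ w) :
    steinG s w = Real.exp (w^2/2) * (Jf s - Phi s * Jf w) := by
  rw [steinG]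
  congr 1
  rw [← Set.Iic_union_Ioc_eq_Iic h,
    setIntegral_union (Set.Iic_disjoint_Ioc le_rfl) measurableSet_Ioc
      (stein_integrand_integrable s).integrableOn (stein_integrand_integrable s).integrableOn]
  have h1 : EqOn (fun u : ℝ => ((if u ≤ s then (1 : ℝ) else 0) - Phi s) * Real.exp (-u ^ 2 / 2))
      (fun u : ℝ => (1 - Phi s) * Real.exp (-u ^ 2 / 2)) (Set.Iic s) :=
    fun u hu => by simp only [if_pos (mem_Iic.mp hu)]
  have h2 : EqOn (fun u : ℝ => ((if u ≤ s then (1 : ℝ) else 0) - Phi s) * Real.exp (-u ^ 2 / 2))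
      (fun u : ℝ => (0 - Phi s) * Real.exp (-u ^ 2 / 2)) (Set.Ioc s w) :=
    fun u hu => by simp only [if_neg (not_le.mpr hu.1)]
  rw [setIntegral_congr_fun measurableSet_Iic h1, setIntegral_congr_fun measurableSet_Ioc h2,
    integral_const_mul, integral_const_mul]
  have h3 : (∫ u in Set.Iic s, Real.exp (-u^2/2)) = Jf s := rfl
  have h4 : (∫ u in Set.Ioc s w, Real.exp (-u^2/2)) = Jf w - Jf s := integral_Ioc_g h
  rw [h3, h4]  -- may fail on exponent normal form
  ring

lemma shift_Ioi (w : ℝ) (g : ℝ → ℝ) :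
    ∫ u in Set.Ioi w, g (u - w) = ∫ v in Set.Ioi (0:ℝ), g v := by
  have h : MeasurePreserving (fun x : ℝ => x - w) volume volume :=
    measurePreserving_sub_right volume w
  have he : MeasurableEmbedding (fun x : ℝ => x - w) :=
    (MeasurableEquiv.subRight w).measurableEmbedding
  have := h.setIntegral_preimage_emb he g (Set.Ioi 0)
  rw [← this]
  congr 1
  ext x
  simp [sub_pos]

lemma tailA {w : ℝ} (hw : 0 ≤ w) :
    Real.sqrt (2*Real.pi) - Jf w ≤ Real.exp (-w^2/2) * (Real.sqrt (2*Real.pi)/2) := by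
  have h1 : Real.sqrt (2*Real.pi) - Jf w = ∫ u in Set.Ioi w, Real.exp (-u^2/2) := by
    linarith [Jf_add_tail w]
  have h2 : ∫ u in Set.Ioi w, Real.exp (-w^2/2) * Real.exp (-(u-w)^2/2)
      = Real.exp (-w^2/2) * (Real.sqrt (2*Real.pi)/2) := by
    rw [integral_const_mul]
    congr 1
    rw [← ghalf, ← shift_Ioi w (fun v => Real.exp (-v^2/2))]
  rw [h1, ← h2]
  apply setIntegral_mono_on gint.integrableOn
  · exact ((gint.comp_sub_right w).const_mul _).integrableOn
  · exact measurableSet_Ioi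
  · intro u hu
    rw [← Real.exp_add, Real.exp_le_exp]
    have : w ≤ u := le_of_lt hu
    nlinarith

lemma tailB {w : ℝ} (hw : 0 < w) :
    Real.sqrt (2*Real.pi) - Jf w ≤ Real.exp (-w^2/2) / w := by
  have h1 : Real.sqrt (2*Real.pi) - Jf w = ∫ u in Set.Ioi w, Real.exp (-u^2/2) := by
    linarith [Jf_add_tail w]
  have hint : IntegrableOn (fun u : ℝ => Real.exp (-(w*u))) (Set.Ioi w) := by
    have := exp_neg_integrableOn_Ioi w hw
    simpa [neg_mul] using this
  have h2 : ∫ u in Set.Ioi w, Real.exp (w^2/2) * Real.exp (-(w*u))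
      = Real.exp (-w^2/2) / w := by
    rw [integral_const_mul]
    have h3 : ∫ u in Set.Ioi w, Real.exp (-(w*u))
        = w⁻¹ • ∫ x in Set.Ioi (w*w), Real.exp (-x) := by
      exact integral_comp_mul_left_Ioi (fun y => Real.exp (-y)) w hw
    rw [h3, integral_exp_neg_Ioi, smul_eq_mul]
    have he : Real.exp (w^2/2) * Real.exp (-(w*w)) = Real.exp (-w^2/2) := by
      rw [← Real.exp_add]; congr 1; ring
    rw [div_eq_mul_inv, ← he]
    ring_nf
  rw [h1, ← h2]
  apply setIntegral_mono_on gint.integrableOn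
  · exact (hint.const_mul _)
  · exact measurableSet_Ioi
  · intro u hu
    rw [← Real.exp_add, Real.exp_le_exp]
    nlinarith [sq_nonneg (u - w)]

lemma Jf_reflect (w : ℝ) : Jf w = Real.sqrt (2*Real.pi) - Jf (-w) := by
  have h : ∫ u in Set.Iic w, Real.exp (-u^2/2)
      = ∫ x in Set.Ioi (-w), Real.exp (-x^2/2) := by
    rw [← integral_comp_neg_Iic w (fun x => Real.exp (-x^2/2))]
    congr 1
    ext x
    ring_nf
  have := Jf_add_tail (-w)
  rw [Jf, h]
  linarith

lemma tailA' {w : ℝ} (hw : w ≤ 0) :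
    Jf w ≤ Real.exp (-w^2/2) * (Real.sqrt (2*Real.pi)/2) := by
  rw [Jf_reflect]
  have := tailA (neg_nonneg.mpr hw)
  have h : (-w)^2 = w^2 := by ring
  rw [h] at this
  linarith

lemma tailB' {w : ℝ} (hw : w < 0) :
    Jf w ≤ Real.exp (-w^2/2) / (-w) := by
  rw [Jf_reflect]
  have := tailB (neg_pos.mpr hw)
  have h : (-w)^2 = w^2 := by ring
  rw [h] at this
  linarith

noncomputable def phiF (s t : ℝ) : ℝ := Real.exp (t^2/2) * (Jf s - Phi s * Jf t)
noncomputable def psiF (s t : ℝ) : ℝ := Real.exp (t^2/2) * ((1 - Phi s) * Jf t)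

lemma steinG_eq_phiF {s w : ℝ} (h : s ≤ w) : steinG s w = phiF s w := steinG_above h
lemma steinG_eq_psiF {s w : ℝ} (h : w ≤ s) : steinG s w = psiF s w := steinG_below h

lemma Jf_eq_Phi (s : ℝ) : Jf s = Phi s * Real.sqrt (2*Real.pi) := by
  rw [Phi_eq_s12, div_mul_cancel₀]
  positivity

lemma exp_cancel (t : ℝ) : Real.exp (t^2/2) * Real.exp (-t^2/2) = 1 := by
  rw [← Real.exp_add]
  rw [show t^2/2 + -t^2/2 = 0 by ring, Real.exp_zero]

lemma phiF_eq (s t : ℝ) :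
    phiF s t = Real.exp (t^2/2) * (Phi s * (Real.sqrt (2*Real.pi) - Jf t)) := by
  rw [phiF, Jf_eq_Phi s]
  ring

lemma exp_half_hasDeriv (t : ℝ) :
    HasDerivAt (fun t : ℝ => Real.exp (t^2/2)) (t * Real.exp (t^2/2)) t := by
  have h := (((hasDerivAt_pow 2 t).div_const 2)).exp
  convert h using 1
  simp
  ring

lemma phiF_hasDeriv (s t : ℝ) :
    HasDerivAt (phiF s) (t * phiF s t - Phi s) t := by
  have h2 : HasDerivAt (fun t : ℝ => Jf s - Phi s * Jf t)
      (-(Phi s * Real.exp (-t^2/2))) t :=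
    (((Jf_hasDeriv t).const_mul (Phi s))).const_sub (Jf s)
  have h := (exp_half_hasDeriv t).fun_mul h2
  refine h.congr_deriv (Eq.symm ?_)
  have hc := exp_cancel t
  simp only [phiF]
  linear_combination (Phi s) * hc

lemma psiF_hasDeriv (s t : ℝ) :
    HasDerivAt (psiF s) (t * psiF s t + (1 - Phi s)) t := by
  have h2 : HasDerivAt (fun t : ℝ => (1 - Phi s) * Jf t)
      ((1 - Phi s) * Real.exp (-t^2/2)) t := (Jf_hasDeriv t).const_mul _
  have h := (exp_half_hasDeriv t).fun_mul h2
  refine h.congr_deriv (Eq.symm ?_)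
  have hc := exp_cancel t
  simp only [psiF]
  linear_combination (Phi s - 1) * hc

lemma sqrt2pi_pos : 0 < Real.sqrt (2*Real.pi) := Real.sqrt_pos.mpr (by positivity)

lemma Phi_mono {s t : ℝ} (h : s ≤ t) : Phi s ≤ Phi t := by
  rw [Phi_eq_s12, Phi_eq_s12]
  gcongr
  exact Jf_mono h

lemma phiF_nonneg (s t : ℝ) : 0 ≤ phiF s t := by
  rw [phiF_eq]
  exact mul_nonneg (Real.exp_pos _).le
    (mul_nonneg (Phi_nonneg s) (sub_nonneg.mpr (Jf_le t)))

lemma psiF_nonneg (s t : ℝ) : 0 ≤ psiF s t :=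
  mul_nonneg (Real.exp_pos _).le
    (mul_nonneg (by linarith [Phi_le_one s]) (Jf_nonneg t))

lemma phiF_le {s t : ℝ} (h : s ≤ t) : phiF s t ≤ Real.sqrt (2*Real.pi) / 2 := by
  have hE := Real.exp_pos (t^2/2)
  have hT0 : 0 ≤ Real.sqrt (2*Real.pi) - Jf t := sub_nonneg.mpr (Jf_le t)
  have hTle : Real.sqrt (2*Real.pi) - Jf t ≤ Real.sqrt (2*Real.pi) := by
    linarith [Jf_nonneg t]
  have hc := exp_cancel t
  rw [phiF_eq]
  rcases le_or_gt 0 t with h0 | h0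
  · have hA := mul_le_mul_of_nonneg_left (tailA h0) hE.le
    have h1 : Phi s * (Real.sqrt (2*Real.pi) - Jf t) ≤ Real.sqrt (2*Real.pi) - Jf t := by
      nlinarith [Phi_le_one s, Phi_nonneg s]
    nlinarith [mul_le_mul_of_nonneg_left h1 hE.le]
  · have hPs : Phi s ≤ Jf t / Real.sqrt (2*Real.pi) := (Phi_mono h).trans_eq (Phi_eq_s12 t)
    have hA' := mul_le_mul_of_nonneg_left (tailA' h0.le) hE.le
    have k1 : Real.exp (t^2/2) * Jf t ≤ Real.sqrt (2*Real.pi)/2 := by nlinarith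
    have k3 : Real.exp (t^2/2) * (Phi s * (Real.sqrt (2*Real.pi) - Jf t))
        ≤ Real.exp (t^2/2) * ((Jf t / Real.sqrt (2*Real.pi)) * (Real.sqrt (2*Real.pi) - Jf t)) :=
      mul_le_mul_of_nonneg_left (mul_le_mul_of_nonneg_right hPs hT0) hE.le
    have k4 : Real.exp (t^2/2) * ((Jf t / Real.sqrt (2*Real.pi)) * (Real.sqrt (2*Real.pi) - Jf t))
        = (Real.exp (t^2/2) * Jf t) * ((Real.sqrt (2*Real.pi) - Jf t) / Real.sqrt (2*Real.pi)) := by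
      ring
    have k5 : (Real.sqrt (2*Real.pi) - Jf t) / Real.sqrt (2*Real.pi) ≤ 1 :=
      (div_le_one sqrt2pi_pos).mpr hTle
    have k6 : 0 ≤ (Real.sqrt (2*Real.pi) - Jf t) / Real.sqrt (2*Real.pi) :=
      div_nonneg hT0 sqrt2pi_pos.le
    nlinarith [mul_le_mul_of_nonneg_right k1 k6]

lemma psiF_le {s t : ℝ} (h : t ≤ s) : psiF s t ≤ Real.sqrt (2*Real.pi) / 2 := by
  have hE := Real.exp_pos (t^2/2)
  have hJ0 := Jf_nonneg t
  have hJle := Jf_le t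
  have hc := exp_cancel t
  rw [psiF]
  rcases le_or_gt t 0 with h0 | h0
  · have hA' := mul_le_mul_of_nonneg_left (tailA' h0) hE.le
    have h1 : (1 - Phi s) * Jf t ≤ Jf t := by
      nlinarith [Phi_le_one s, Phi_nonneg s]
    nlinarith [mul_le_mul_of_nonneg_left h1 hE.le]
  · have hPs : 1 - Phi s ≤ (Real.sqrt (2*Real.pi) - Jf t) / Real.sqrt (2*Real.pi) := by
      have h2 : Phi t ≤ Phi s := Phi_mono h
      have h3 : Phi t = Jf t / Real.sqrt (2*Real.pi) := Phi_eq_s12 t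
      have h4 : (Real.sqrt (2*Real.pi) - Jf t) / Real.sqrt (2*Real.pi)
          = 1 - Jf t / Real.sqrt (2*Real.pi) := by
        field_simp
      rw [h4, ← h3]
      linarith
    have hA := mul_le_mul_of_nonneg_left (tailA h0.le) hE.le
    have k1 : Real.exp (t^2/2) * (Real.sqrt (2*Real.pi) - Jf t) ≤ Real.sqrt (2*Real.pi)/2 := by
      nlinarith
    have hT0 : 0 ≤ Real.sqrt (2*Real.pi) - Jf t := sub_nonneg.mpr hJle
    have k3 : Real.exp (t^2/2) * ((1 - Phi s) * Jf t)
        ≤ Real.exp (t^2/2) * (((Real.sqrt (2*Real.pi) - Jf t) / Real.sqrt (2*Real.pi)) * Jf t) :=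
      mul_le_mul_of_nonneg_left (mul_le_mul_of_nonneg_right hPs hJ0) hE.le
    have k4 : Real.exp (t^2/2) * (((Real.sqrt (2*Real.pi) - Jf t) / Real.sqrt (2*Real.pi)) * Jf t)
        = (Real.exp (t^2/2) * (Real.sqrt (2*Real.pi) - Jf t)) * (Jf t / Real.sqrt (2*Real.pi)) := by
      ring
    have k5 : Jf t / Real.sqrt (2*Real.pi) ≤ 1 := (div_le_one sqrt2pi_pos).mpr hJle
    have k6 : 0 ≤ Jf t / Real.sqrt (2*Real.pi) := div_nonneg hJ0 sqrt2pi_pos.le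
    nlinarith [mul_le_mul_of_nonneg_right k1 k6]

lemma abs_t_phiF {s t : ℝ} (h : s ≤ t) : |t * phiF s t| ≤ 1 := by
  have hE := Real.exp_pos (t^2/2)
  have hc := exp_cancel t
  have hP0 := phiF_nonneg s t
  rcases lt_trichotomy t 0 with h0 | h0 | h0
  · have hB' := mul_le_mul_of_nonneg_left (tailB' h0) hE.le
    have hBB : Real.exp (t^2/2) * Jf t ≤ 1 / (-t) := by
      calc Real.exp (t^2/2) * Jf t ≤ Real.exp (t^2/2) * (Real.exp (-t^2/2) / (-t)) := hB'
        _ = (Real.exp (t^2/2) * Real.exp (-t^2/2)) / (-t) := by ring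
        _ = 1 / (-t) := by rw [hc]
    have hJ : Jf s ≤ Jf t := Jf_mono h
    have h1 : phiF s t ≤ Real.exp (t^2/2) * Jf t := by
      rw [phiF_eq]
      have h2 : Phi s * (Real.sqrt (2*Real.pi) - Jf t) ≤ Phi s * Real.sqrt (2*Real.pi) := by
        nlinarith [Phi_nonneg s, Jf_nonneg t]
      have h3 : Phi s * Real.sqrt (2*Real.pi) = Jf s := (Jf_eq_Phi s).symm
      nlinarith
    have h4 : -t * phiF s t ≤ 1 := by
      have h5 := mul_le_mul_of_nonneg_left (h1.trans hBB) (by linarith : (0:ℝ) ≤ -t)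
      have h6 : -t * (1 / (-t)) = 1 := by
        rw [mul_one_div, div_self (by linarith : -t ≠ 0)]
      linarith
    rw [abs_of_nonpos (by nlinarith)]
    linarith
  · simp [h0]
  · have hB := mul_le_mul_of_nonneg_left (tailB h0) hE.le
    have hBB : Real.exp (t^2/2) * (Real.sqrt (2*Real.pi) - Jf t) ≤ 1 / t := by
      calc Real.exp (t^2/2) * (Real.sqrt (2*Real.pi) - Jf t)
          ≤ Real.exp (t^2/2) * (Real.exp (-t^2/2) / t) := hB
        _ = (Real.exp (t^2/2) * Real.exp (-t^2/2)) / t := by ring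
        _ = 1 / t := by rw [hc]
    have h1 : phiF s t ≤ Real.exp (t^2/2) * (Real.sqrt (2*Real.pi) - Jf t) := by
      rw [phiF_eq]
      have h2 : Phi s * (Real.sqrt (2*Real.pi) - Jf t) ≤ Real.sqrt (2*Real.pi) - Jf t := by
        nlinarith [Phi_le_one s, Phi_nonneg s, sub_nonneg.mpr (Jf_le t)]
      exact mul_le_mul_of_nonneg_left h2 hE.le
    have h4 : t * phiF s t ≤ 1 := by
      have h5 := mul_le_mul_of_nonneg_left (h1.trans hBB) h0.le
      have h6 : t * (1 / t) = 1 := by field_simp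
      linarith
    rw [abs_of_nonneg (by nlinarith)]
    linarith

lemma abs_t_psiF {s t : ℝ} (h : t ≤ s) : |t * psiF s t| ≤ 1 := by
  have hE := Real.exp_pos (t^2/2)
  have hc := exp_cancel t
  have hP0 := psiF_nonneg s t
  rcases lt_trichotomy t 0 with h0 | h0 | h0
  · have hB' := mul_le_mul_of_nonneg_left (tailB' h0) hE.le
    have hBB : Real.exp (t^2/2) * Jf t ≤ 1 / (-t) := by
      calc Real.exp (t^2/2) * Jf t ≤ Real.exp (t^2/2) * (Real.exp (-t^2/2) / (-t)) := hB'
        _ = (Real.exp (t^2/2) * Real.exp (-t^2/2)) / (-t) := by ring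
        _ = 1 / (-t) := by rw [hc]
    have h1 : psiF s t ≤ Real.exp (t^2/2) * Jf t := by
      rw [psiF]
      have h2 : (1 - Phi s) * Jf t ≤ Jf t := by
        nlinarith [Phi_le_one s, Phi_nonneg s, Jf_nonneg t]
      exact mul_le_mul_of_nonneg_left h2 hE.le
    have h4 : -t * psiF s t ≤ 1 := by
      have h5 := mul_le_mul_of_nonneg_left (h1.trans hBB) (by linarith : (0:ℝ) ≤ -t)
      have h6 : -t * (1 / (-t)) = 1 := by
        rw [mul_one_div, div_self (by linarith : -t ≠ 0)]
      linarith
    rw [abs_of_nonpos (by nlinarith)]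
    linarith
  · simp [h0]
  · have hB := mul_le_mul_of_nonneg_left (tailB h0) hE.le
    have hBB : Real.exp (t^2/2) * (Real.sqrt (2*Real.pi) - Jf t) ≤ 1 / t := by
      calc Real.exp (t^2/2) * (Real.sqrt (2*Real.pi) - Jf t)
          ≤ Real.exp (t^2/2) * (Real.exp (-t^2/2) / t) := hB
        _ = (Real.exp (t^2/2) * Real.exp (-t^2/2)) / t := by ring
        _ = 1 / t := by rw [hc]
    have h1 : psiF s t ≤ Real.exp (t^2/2) * (Real.sqrt (2*Real.pi) - Jf t) := by
      rw [psiF]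
      have h2 : (1 - Phi s) * Real.sqrt (2*Real.pi) = Real.sqrt (2*Real.pi) - Jf s := by
        rw [Jf_eq_Phi s]; ring
      have h3 : (1 - Phi s) * Jf t ≤ (1 - Phi s) * Real.sqrt (2*Real.pi) := by
        nlinarith [Phi_le_one s, Jf_le t, Jf_nonneg t]
      have h4 : Real.sqrt (2*Real.pi) - Jf s ≤ Real.sqrt (2*Real.pi) - Jf t := by
        linarith [Jf_mono h]
      have h5 : (1 - Phi s) * Jf t ≤ Real.sqrt (2*Real.pi) - Jf t := by linarith
      exact mul_le_mul_of_nonneg_left h5 hE.le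
    have h4 : t * psiF s t ≤ 1 := by
      have h5 := mul_le_mul_of_nonneg_left (h1.trans hBB) h0.le
      have h6 : t * (1 / t) = 1 := by field_simp
      linarith
    rw [abs_of_nonneg (by nlinarith)]
    linarith

lemma lip_bound {f f' : ℝ → ℝ} {C x y : ℝ} 
    (hd : ∀ t ∈ Set.Icc x y, HasDerivWithinAt f (f' t) (Set.Icc x y) t)
    (hC : ∀ t ∈ Set.Icc x y, |f' t| ≤ C) :
    ∀ u ∈ Set.Icc x y, ∀ v ∈ Set.Icc x y, |f u - f v| ≤ C * |u - v| := by
  intro u hu v hv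
  have := (convex_Icc x y).norm_image_sub_le_of_norm_hasDerivWithin_le hd
    (fun t ht => by rw [Real.norm_eq_abs]; exact hC t ht) hv hu
  simpa [Real.norm_eq_abs] using this

lemma taylor_bound {f f' : ℝ → ℝ} {C x y : ℝ} (hxy : x ≤ y)
    (hd : ∀ t ∈ Set.Icc x y, HasDerivWithinAt f (f' t) (Set.Icc x y) t)
    (hlip : ∀ t ∈ Set.Icc x y, |f' t - f' y| ≤ C * (y - x)) :
    |f x - f y - f' y * (x - y)| ≤ C * (y - x)^2 := by
  have key : ∀ t ∈ Set.Icc x y,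
      HasDerivWithinAt (fun u => f u - f' y * u) (f' t - f' y) (Set.Icc x y) t := by
    intro t ht
    simpa using (hd t ht).fun_sub ((hasDerivWithinAt_id t (Set.Icc x y)).const_mul (f' y))
  have hx : x ∈ Set.Icc x y := ⟨le_refl x, hxy⟩
  have hy : y ∈ Set.Icc x y := ⟨hxy, le_refl y⟩
  have := (convex_Icc x y).norm_image_sub_le_of_norm_hasDerivWithin_le key
    (fun t ht => by rw [Real.norm_eq_abs]; exact hlip t ht) hy hx
  rw [Real.norm_eq_abs, Real.norm_eq_abs] at this
  have h1 : f x - f' y * x - (f y - f' y * y) = f x - f y - f' y * (x - y) := by ring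
  rw [h1] at this
  have h2 : |x - y| = y - x := by rw [abs_sub_comm, abs_of_nonneg (by linarith)]
  rw [h2] at this
  nlinarith [this]

lemma dphi_hasDeriv (s t : ℝ) :
    HasDerivAt (fun t => t * phiF s t - Phi s)
      (phiF s t + t * (t * phiF s t - Phi s)) t := by
  have h := ((hasDerivAt_id t).fun_mul (phiF_hasDeriv s t)).sub_const (Phi s)
  refine h.congr_deriv (Eq.symm ?_)
  simp only [id_eq]
  ring

lemma dpsi_hasDeriv (s t : ℝ) :
    HasDerivAt (fun t => t * psiF s t + (1 - Phi s))
      (psiF s t + t * (t * psiF s t + (1 - Phi s))) t := by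
  have h := ((hasDerivAt_id t).fun_mul (psiF_hasDeriv s t)).add_const (1 - Phi s)
  refine h.congr_deriv (Eq.symm ?_)
  simp only [id_eq]
  ring

lemma phi2_bound {s t : ℝ} (h : s ≤ t) :
    |phiF s t + t * (t * phiF s t - Phi s)| ≤ Real.sqrt (2*Real.pi)/2 + 2*|t| := by
  have h1 : |phiF s t| ≤ Real.sqrt (2*Real.pi)/2 := by
    rw [abs_of_nonneg (phiF_nonneg s t)]; exact phiF_le h
  have h2 : |t * (t * phiF s t - Phi s)| ≤ 2*|t| := by
    rw [abs_mul]
    have h3 : |t * phiF s t - Phi s| ≤ 2 := by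
      have := abs_t_phiF h
      have h4 : |Phi s| ≤ 1 := by
        rw [abs_of_nonneg (Phi_nonneg s)]; exact Phi_le_one s
      calc |t * phiF s t - Phi s| ≤ |t * phiF s t| + |Phi s| := abs_sub _ _
        _ ≤ 2 := by linarith
    nlinarith [abs_nonneg t]
  calc |phiF s t + t * (t * phiF s t - Phi s)|
      ≤ |phiF s t| + |t * (t * phiF s t - Phi s)| := abs_add_le _ _
    _ ≤ _ := by linarith

lemma psi2_bound {s t : ℝ} (h : t ≤ s) :
    |psiF s t + t * (t * psiF s t + (1 - Phi s))| ≤ Real.sqrt (2*Real.pi)/2 + 2*|t| := by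
  have h1 : |psiF s t| ≤ Real.sqrt (2*Real.pi)/2 := by
    rw [abs_of_nonneg (psiF_nonneg s t)]; exact psiF_le h
  have h2 : |t * (t * psiF s t + (1 - Phi s))| ≤ 2*|t| := by
    rw [abs_mul]
    have h3 : |t * psiF s t + (1 - Phi s)| ≤ 2 := by
      have := abs_t_psiF h
      have h4 : |1 - Phi s| ≤ 1 := by
        rw [abs_of_nonneg (by linarith [Phi_le_one s])]; linarith [Phi_nonneg s]
      calc |t * psiF s t + (1 - Phi s)| ≤ |t * psiF s t| + |1 - Phi s| := abs_add_le _ _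
        _ ≤ 2 := by linarith
    nlinarith [abs_nonneg t]
  calc |psiF s t + t * (t * psiF s t + (1 - Phi s))|
      ≤ |psiF s t| + |t * (t * psiF s t + (1 - Phi s))| := abs_add_le _ _
    _ ≤ _ := by linarith

/-- Taylor-type estimate for the Stein solution across the singularity, case `b ≤ s < a`. -/
theorem steinG_taylor_cross_down (s a b : ℝ) (hb : b ≤ s) (ha : s < a) :
    |steinG s b - steinG s a - (a * steinG s a - Phi s) * (b - a) - (b - s)| ≤
      2 * (Real.sqrt (2 * Real.pi) / 4 + |a| + (a - b)) * (a - b) ^ 2 := by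
  have hba : b ≤ a := hb.trans ha.le
  set K : ℝ := |a| + (a - b) with hKdef
  set C : ℝ := Real.sqrt (2*Real.pi)/2 + 2*K with hCdef
  have hC0 : 0 ≤ C := by
    have := abs_nonneg a
    have := sqrt2pi_pos
    simp only [hCdef, hKdef]
    nlinarith
  have habs : ∀ t ∈ Set.Icc b a, |t| ≤ K := by
    intro t ht
    rw [abs_le]
    constructor
    · have := neg_abs_le a; simp only [hKdef]; linarith [ht.1]
    · have := le_abs_self a; simp only [hKdef]; linarith [ht.2]
  -- Taylor bound for phiF on [s, a]
  have hsub_phi : Set.Icc s a ⊆ Set.Icc b a := Set.Icc_subset_Icc_left hb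
  have hdphi : ∀ t ∈ Set.Icc s a,
      HasDerivWithinAt (fun t => t * phiF s t - Phi s)
        (phiF s t + t * (t * phiF s t - Phi s)) (Set.Icc s a) t :=
    fun t _ => (dphi_hasDeriv s t).hasDerivWithinAt
  have hC2phi : ∀ t ∈ Set.Icc s a, |phiF s t + t * (t * phiF s t - Phi s)| ≤ C := by
    intro t ht
    calc |phiF s t + t * (t * phiF s t - Phi s)|
        ≤ Real.sqrt (2*Real.pi)/2 + 2*|t| := phi2_bound ht.1
      _ ≤ C := by have := habs t (hsub_phi ht); simp only [hCdef]; linarith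
  have hlipphi := lip_bound hdphi hC2phi
  have hphiD : ∀ t ∈ Set.Icc s a,
      HasDerivWithinAt (phiF s) (t * phiF s t - Phi s) (Set.Icc s a) t :=
    fun t _ => (phiF_hasDeriv s t).hasDerivWithinAt
  have hlipphi' : ∀ t ∈ Set.Icc s a,
      |(t * phiF s t - Phi s) - (a * phiF s a - Phi s)| ≤ C * (a - s) := by
    intro t ht
    have h1 := hlipphi t ht a ⟨ha.le, le_refl a⟩
    have h2 : |t - a| ≤ a - s := by
      rw [abs_sub_comm, abs_of_nonneg (by linarith [ht.2])]
      linarith [ht.1]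
    calc |(t * phiF s t - Phi s) - (a * phiF s a - Phi s)| ≤ C * |t - a| := h1
      _ ≤ C * (a - s) := mul_le_mul_of_nonneg_left h2 hC0
  have Tphi := taylor_bound ha.le hphiD hlipphi'
  -- Taylor bound for psiF on [b, s]
  have hsub_psi : Set.Icc b s ⊆ Set.Icc b a := Set.Icc_subset_Icc_right ha.le
  have hdpsi : ∀ t ∈ Set.Icc b s,
      HasDerivWithinAt (fun t => t * psiF s t + (1 - Phi s))
        (psiF s t + t * (t * psiF s t + (1 - Phi s))) (Set.Icc b s) t :=
    fun t _ => (dpsi_hasDeriv s t).hasDerivWithinAt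
  have hC2psi : ∀ t ∈ Set.Icc b s, |psiF s t + t * (t * psiF s t + (1 - Phi s))| ≤ C := by
    intro t ht
    calc |psiF s t + t * (t * psiF s t + (1 - Phi s))|
        ≤ Real.sqrt (2*Real.pi)/2 + 2*|t| := psi2_bound ht.2
      _ ≤ C := by have := habs t (hsub_psi ht); simp only [hCdef]; linarith
  have hpsiD : ∀ t ∈ Set.Icc b s,
      HasDerivWithinAt (psiF s) (t * psiF s t + (1 - Phi s)) (Set.Icc b s) t :=
    fun t _ => (psiF_hasDeriv s t).hasDerivWithinAt
  have hlippsi := lip_bound hdpsi hC2psi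
  have hlippsi' : ∀ t ∈ Set.Icc b s,
      |(t * psiF s t + (1 - Phi s)) - (s * psiF s s + (1 - Phi s))| ≤ C * (s - b) := by
    intro t ht
    have h1 := hlippsi t ht s ⟨hb, le_refl s⟩
    have h2 : |t - s| ≤ s - b := by
      rw [abs_sub_comm, abs_of_nonneg (by linarith [ht.2])]
      linarith [ht.1]
    calc _ ≤ C * |t - s| := h1
      _ ≤ C * (s - b) := mul_le_mul_of_nonneg_left h2 hC0
  have Tpsi := taylor_bound hb hpsiD hlippsi'
  -- cross term
  have hcross : |(s * phiF s s - Phi s) - (a * phiF s a - Phi s)| ≤ C * (a - s) := by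
    have h1 := hlipphi s ⟨le_refl s, ha.le⟩ a ⟨ha.le, le_refl a⟩
    have h2 : |s - a| = a - s := by rw [abs_sub_comm, abs_of_nonneg (by linarith)]
    rw [h2] at h1
    exact h1
  -- identities
  have hGa : steinG s a = phiF s a := steinG_eq_phiF ha.le
  have hGb : steinG s b = psiF s b := steinG_eq_psiF hb
  have hmatch : psiF s s = phiF s s := by rw [psiF, phiF]; ring
  -- assemble
  rw [hGa, hGb]
  have goal_eq :
      psiF s b - phiF s a - (a * phiF s a - Phi s) * (b - a) - (b - s)
      = (psiF s b - psiF s s - (s * psiF s s + (1 - Phi s)) * (b - s))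
        + (phiF s s - phiF s a - (a * phiF s a - Phi s) * (s - a))
        + ((s * phiF s s - Phi s) - (a * phiF s a - Phi s)) * (b - s) := by
    rw [hmatch]
    ring
  rw [goal_eq]
  have e3 : |((s * phiF s s - Phi s) - (a * phiF s a - Phi s)) * (b - s)|
      ≤ (C * (a - s)) * (s - b) := by
    rw [abs_mul]
    have h2 : |b - s| = s - b := by rw [abs_sub_comm, abs_of_nonneg (by linarith)]
    rw [h2]
    exact mul_le_mul_of_nonneg_right hcross (by linarith)
  have habs_sum := abs_add_le
    ((psiF s b - psiF s s - (s * psiF s s + (1 - Phi s)) * (b - s))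
      + (phiF s s - phiF s a - (a * phiF s a - Phi s) * (s - a)))
    (((s * phiF s s - Phi s) - (a * phiF s a - Phi s)) * (b - s))
  have habs_sum2 := abs_add_le
    (psiF s b - psiF s s - (s * psiF s s + (1 - Phi s)) * (b - s))
    (phiF s s - phiF s a - (a * phiF s a - Phi s) * (s - a))
  have hfinal : C * (s - b)^2 + C * (a - s)^2 + (C * (a - s)) * (s - b)
      ≤ 2 * (Real.sqrt (2 * Real.pi) / 4 + |a| + (a - b)) * (a - b) ^ 2 := by
    have hcc : 2 * (Real.sqrt (2 * Real.pi) / 4 + |a| + (a - b)) = C := by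
      simp only [hCdef, hKdef]; ring
    rw [hcc]
    nlinarith [mul_nonneg (mul_nonneg hC0 (by linarith : (0:ℝ) ≤ a - s)) (by linarith : (0:ℝ) ≤ s - b)]
  have step1 : |psiF s b - psiF s s - (s * psiF s s + (1 - Phi s)) * (b - s) +
          (phiF s s - phiF s a - (a * phiF s a - Phi s) * (s - a)) +
        (s * phiF s s - Phi s - (a * phiF s a - Phi s)) * (b - s)|
      ≤ C * (s - b)^2 + C * (a - s)^2 + (C * (a - s)) * (s - b) := by
    linarith [Tphi, Tpsi, e3, habs_sum, habs_sum2]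
  exact step1.trans hfinal
end
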